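/- Let β ∈ W^{2,p}(S¹) with 2 < p and suppose ∫_{S¹}|β + β''| dt > 0. Define v_β(x) = |x|β(x/|x|) on the unit disk B₁ ⊂ ℝ². Then D²v_β ∉ L^p(B₁) for any p ≥ 2. -/

import Mathlib

open MeasureTheory Real Set
open scoped ENNReal NNReal
noncomputable section

/-- Euclidean norm on `ℝ × ℝ`. -/
def n2 (x : ℝ × ℝ) : ℝ := Real.sqrt (x.1 ^ 2 + x.2 ^ 2)

/-- The open unit disk. -/
def B1 : Set (ℝ × ℝ) := {x | n2 x < 1}

/-- Partial derivative in direction `i`. -/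
def pd (i : Fin 2) (f : ℝ × ℝ → ℝ) (x : ℝ × ℝ) : ℝ :=
  fderiv ℝ f x (if i = 0 then (1, 0) else (0, 1))

/-- Entries of the Hessian. -/
def hess (f : ℝ × ℝ → ℝ) (i j : Fin 2) (x : ℝ × ℝ) : ℝ := pd i (pd j f) x

/-- Hessian determinant (the linearized Gauss curvature). -/
def detHess (f : ℝ × ℝ → ℝ) (x : ℝ × ℝ) : ℝ :=
  hess f 0 0 x * hess f 1 1 x - hess f 0 1 x * hess f 1 0 x

/-- Squared Frobenius norm of the Hessian. -/
def hnormSq (f : ℝ × ℝ → ℝ) (x : ℝ × ℝ) : ℝ := ∑ i : Fin 2, ∑ j : Fin 2, (hess f i j x) ^ 2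

/-- Components of an `ℝ²`-valued map. -/
def uc (i : Fin 2) (u : ℝ × ℝ → ℝ × ℝ) : ℝ × ℝ → ℝ :=
  fun x => if i = 0 then (u x).1 else (u x).2

/-- Entries of the membrane strain `sym Du + ½ Dv ⊗ Dv`. -/
def memb (u : ℝ × ℝ → ℝ × ℝ) (v : ℝ × ℝ → ℝ) (i j : Fin 2) (x : ℝ × ℝ) : ℝ :=
  (pd i (uc j u) x + pd j (uc i u) x) / 2 + (pd i v x * pd j v x) / 2

/-- Squared Frobenius norm of the membrane strain. -/
def membSq (u : ℝ × ℝ → ℝ × ℝ) (v : ℝ × ℝ → ℝ) (x : ℝ × ℝ) : ℝ :=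
  ∑ i : Fin 2, ∑ j : Fin 2, (memb u v i j x) ^ 2

/-- Unit tangent to the circle. -/
def eT (t : ℝ) : ℝ × ℝ := (Real.cos t, Real.sin t)

/-- Rotated unit vector. -/
def eTperp (t : ℝ) : ℝ × ℝ := (-Real.sin t, Real.cos t)

/-- Angle of a point of the plane. -/
def ang (x : ℝ × ℝ) : ℝ := Complex.arg ⟨x.1, x.2⟩

/-- The conical out-of-plane displacement `v_β(x) = |x| β(x̂)`. -/
def vbeta (β : ℝ → ℝ) (x : ℝ × ℝ) : ℝ := n2 x * β (ang x)

/-- `ζ(t) = ½∫₀ᵗ (β² - β'²)`. -/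
def zbeta (β : ℝ → ℝ) (t : ℝ) : ℝ := (1 / 2) * ∫ s in (0:ℝ)..t, (β s ^ 2 - (deriv β s) ^ 2)

/-- The conical in-plane displacement `u_β`. -/
def ubeta (β : ℝ → ℝ) (x : ℝ × ℝ) : ℝ × ℝ :=
  (n2 x * (-(β (ang x)) ^ 2 / 2)) • eT (ang x) + (n2 x * zbeta β (ang x)) • eTperp (ang x)

/-- `β ∈ W^{2,p}(S¹)`: a `2π`-periodic `C¹` function whose derivative is (a.e.)
differentiable with second derivative in `L^p`. -/
def MemW2p (p : ℝ) (β : ℝ → ℝ) : Prop :=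
  Function.Periodic β (2 * π) ∧ ContDiff ℝ 1 β ∧
    (∀ᵐ t : ℝ, DifferentiableAt ℝ (deriv β) t) ∧
    MemLp (deriv (deriv β)) (ENNReal.ofReal p) (volume.restrict (Set.Ioc (0:ℝ) (2 * π)))

def U : Set (ℝ × ℝ) := {x | 0 < x.1 ∨ x.2 ≠ 0}

lemma isOpen_U : IsOpen U :=
  (isOpen_lt continuous_const continuous_fst).union (isOpen_ne_fun continuous_snd continuous_const)

def zz (x : ℝ × ℝ) : ℂ := ⟨x.1, x.2⟩
lemma zz_mem_slit {x : ℝ × ℝ} (hx : x ∈ U) : zz x ∈ Complex.slitPlane := hx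
lemma zz_ne_zero {x : ℝ × ℝ} (hx : x ∈ U) : zz x ≠ 0 :=
  Complex.slitPlane_ne_zero (zz_mem_slit hx)

def mkCLM : (ℝ × ℝ) →L[ℝ] ℂ := (Complex.equivRealProdCLM.symm : (ℝ × ℝ) ≃L[ℝ] ℂ)

lemma mkCLM_apply (x : ℝ × ℝ) : mkCLM x = zz x := by
  show Complex.equivRealProdCLM.symm x = zz x
  rw [Complex.equivRealProdCLM_symm_apply]
  simp [zz, Complex.ext_iff]

def Lang (x : ℝ × ℝ) : (ℝ × ℝ) →L[ℝ] ℝ :=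
  (Complex.imCLM.comp (((1 : ℂ →L[ℂ] ℂ).smulRight (zz x)⁻¹).restrictScalars ℝ)).comp mkCLM

lemma hasFDerivAt_arg {z : ℂ} (hz : z ∈ Complex.slitPlane) :
    HasFDerivAt Complex.arg
      (Complex.imCLM.comp (((1 : ℂ →L[ℂ] ℂ).smulRight z⁻¹).restrictScalars ℝ)) z := by
  have h1 : HasFDerivAt Complex.log
      (((1 : ℂ →L[ℂ] ℂ).smulRight z⁻¹).restrictScalars ℝ) z :=
    (Complex.hasDerivAt_log hz).hasFDerivAt.restrictScalars ℝ
  have h2 := Complex.imCLM.hasFDerivAt.comp z h1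
  have h3 : (fun w => (Complex.log w).im) = Complex.arg := funext fun w => Complex.log_im w
  rwa [← h3]

lemma hasFDerivAt_ang {x : ℝ × ℝ} (hx : x ∈ U) : HasFDerivAt ang (Lang x) x := by
  have h2 := (hasFDerivAt_arg (zz_mem_slit hx)).comp x (mkCLM.hasFDerivAt (x := x))
  exact h2

lemma Lang_apply {x : ℝ × ℝ} (h : ℝ × ℝ) :
    Lang x h = (h.2 * x.1 - h.1 * x.2) / (x.1 ^ 2 + x.2 ^ 2) := by
  simp only [Lang, ContinuousLinearMap.comp_apply, ContinuousLinearMap.coe_restrictScalars',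
    ContinuousLinearMap.smulRight_apply, ContinuousLinearMap.one_apply, smul_eq_mul,
    Complex.imCLM_apply, mkCLM_apply]
  rw [Complex.mul_im, Complex.inv_im, Complex.inv_re, Complex.normSq_apply]
  show h.1 * (-x.2/(x.1*x.1+x.2*x.2)) + h.2 * (x.1/(x.1*x.1+x.2*x.2)) = _
  ring

def Ln (x : ℝ × ℝ) : (ℝ × ℝ) →L[ℝ] ℝ :=
  (n2 x)⁻¹ • (x.1 • ContinuousLinearMap.fst ℝ ℝ ℝ + x.2 • ContinuousLinearMap.snd ℝ ℝ ℝ)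

lemma Ln_apply (x h : ℝ × ℝ) : Ln x h = (x.1 * h.1 + x.2 * h.2) / n2 x := by
  simp [Ln, div_eq_inv_mul]; ring

lemma n2_pos {x : ℝ × ℝ} (hx : x ≠ 0) : 0 < n2 x := by
  apply Real.sqrt_pos.2
  have h1 : x.1 ≠ 0 ∨ x.2 ≠ 0 := by
    by_contra hc; push_neg at hc
    exact hx (Prod.ext hc.1 hc.2)
  rcases h1 with h1 | h1
  · have := sq_pos_of_ne_zero h1; nlinarith [sq_nonneg x.2]
  · have := sq_pos_of_ne_zero h1; nlinarith [sq_nonneg x.1]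

lemma sumsq_pos {x : ℝ × ℝ} (hx : x ≠ 0) : (0:ℝ) < x.1 ^ 2 + x.2 ^ 2 := by
  have h1 : x.1 ≠ 0 ∨ x.2 ≠ 0 := by
    by_contra hc; push_neg at hc
    exact hx (Prod.ext hc.1 hc.2)
  rcases h1 with h1 | h1
  · have := sq_pos_of_ne_zero h1; nlinarith [sq_nonneg x.2]
  · have := sq_pos_of_ne_zero h1; nlinarith [sq_nonneg x.1]

lemma hasFDerivAt_n2 {x : ℝ × ℝ} (hx : x ≠ 0) : HasFDerivAt n2 (Ln x) x := by
  have hs : HasFDerivAt (fun y : ℝ × ℝ => y.1 * y.1 + y.2 * y.2)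
      ((x.1 • ContinuousLinearMap.fst ℝ ℝ ℝ + x.1 • ContinuousLinearMap.fst ℝ ℝ ℝ)
        + (x.2 • ContinuousLinearMap.snd ℝ ℝ ℝ + x.2 • ContinuousLinearMap.snd ℝ ℝ ℝ)) x := by
    have h1 : HasFDerivAt (fun y : ℝ × ℝ => y.1) (ContinuousLinearMap.fst ℝ ℝ ℝ) x := hasFDerivAt_fst
    have h2 : HasFDerivAt (fun y : ℝ × ℝ => y.2) (ContinuousLinearMap.snd ℝ ℝ ℝ) x := hasFDerivAt_snd
    exact (h1.mul h1).add (h2.mul h2)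
  have hpos := sumsq_pos hx
  have hpos' : x.1 * x.1 + x.2 * x.2 ≠ 0 := by nlinarith
  have hsq := (Real.hasDerivAt_sqrt hpos').comp_hasFDerivAt x hs
  have heq : n2 = (fun y => Real.sqrt y) ∘ fun y : ℝ × ℝ => y.1 * y.1 + y.2 * y.2 := by
    funext y; simp [n2, Function.comp, sq]
  rw [heq]
  refine hsq.congr_fderiv (Eq.symm ?_)
  refine ContinuousLinearMap.ext fun h => ?_
  rw [Ln_apply]
  simp only [ContinuousLinearMap.coe_smul', Pi.smul_apply, ContinuousLinearMap.add_apply,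
    ContinuousLinearMap.coe_fst', ContinuousLinearMap.coe_snd', smul_eq_mul]
  have hn : n2 x = Real.sqrt (x.1 ^ 2 + x.2 ^ 2) := rfl
  have hs2 : Real.sqrt (x.1 * x.1 + x.2 * x.2) = n2 x := by rw [hn]; ring_nf
  rw [hs2]
  have hnpos := n2_pos hx
  field_simp
  ring

lemma U_ne_zero {x : ℝ × ℝ} (hx : x ∈ U) : x ≠ 0 := by
  intro h; subst h
  rcases hx with h | h
  · exact lt_irrefl 0 h
  · exact h rfl

lemma abs_zz (x : ℝ × ℝ) : ‖zz x‖ = n2 x := by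
  rw [Complex.norm_def, Complex.normSq_apply, n2]
  norm_num [zz, sq]

lemma cos_ang {x : ℝ × ℝ} (hx : x ∈ U) : Real.cos (ang x) = x.1 / n2 x := by
  have := Complex.cos_arg (zz_ne_zero hx)
  rw [abs_zz] at this
  exact this

lemma sin_ang (x : ℝ × ℝ) : Real.sin (ang x) = x.2 / n2 x := by
  have := Complex.sin_arg (zz x)
  rw [abs_zz] at this
  exact this

lemma n2_sq {x : ℝ × ℝ} : n2 x ^ 2 = x.1 ^ 2 + x.2 ^ 2 := by
  rw [n2, Real.sq_sqrt]; positivity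

variable {β : ℝ → ℝ}

lemma hasFDerivAt_vbeta (hβ1 : ContDiff ℝ 1 β) {x : ℝ × ℝ} (hx : x ∈ U) :
    HasFDerivAt (vbeta β) (β (ang x) • Ln x + (n2 x * deriv β (ang x)) • Lang x) x := by
  have hb : HasDerivAt β (deriv β (ang x)) (ang x) :=
    ((hβ1.differentiable one_ne_zero) (ang x)).hasDerivAt
  have h1 := hb.comp_hasFDerivAt x (hasFDerivAt_ang hx)
  have h2 := (hasFDerivAt_n2 (U_ne_zero hx)).mul h1
  refine h2.congr_fderiv (Eq.symm ?_)
  refine ContinuousLinearMap.ext fun h => ?_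
  simp [Function.comp]
  ring

/-- radial/angular components of the gradient -/
def Af (β : ℝ → ℝ) (t : ℝ) : ℝ := β t * Real.cos t - deriv β t * Real.sin t
def Bf (β : ℝ → ℝ) (t : ℝ) : ℝ := β t * Real.sin t + deriv β t * Real.cos t

lemma pd0_vbeta (hβ1 : ContDiff ℝ 1 β) {x : ℝ × ℝ} (hx : x ∈ U) :
    pd 0 (vbeta β) x = Af β (ang x) := by
  have h := hasFDerivAt_vbeta hβ1 hx
  have hr := n2_pos (U_ne_zero hx)
  rw [pd, h.fderiv]
  simp only [if_pos rfl, if_true, ContinuousLinearMap.add_apply, ContinuousLinearMap.coe_smul',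
    Pi.smul_apply, smul_eq_mul]
  rw [Ln_apply, Lang_apply, Af, cos_ang hx, sin_ang]
  have h2 : x.1 ^ 2 + x.2 ^ 2 = n2 x ^ 2 := n2_sq.symm
  field_simp [h2]
  rw [← h2]; ring

lemma pd1_vbeta (hβ1 : ContDiff ℝ 1 β) {x : ℝ × ℝ} (hx : x ∈ U) :
    pd 1 (vbeta β) x = Bf β (ang x) := by
  have h := hasFDerivAt_vbeta hβ1 hx
  have hr := n2_pos (U_ne_zero hx)
  rw [pd, h.fderiv]
  have h10 : (if (1 : Fin 2) = 0 then ((1:ℝ), (0:ℝ)) else (0, 1)) = (0, 1) := if_neg (by decide)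
  rw [h10]
  simp only [ContinuousLinearMap.add_apply, ContinuousLinearMap.coe_smul',
    Pi.smul_apply, smul_eq_mul]
  rw [Ln_apply, Lang_apply, Bf, cos_ang hx, sin_ang]
  have h2 : x.1 ^ 2 + x.2 ^ 2 = n2 x ^ 2 := n2_sq.symm
  field_simp [h2]
  rw [← h2]; ring

lemma Lang_e0 {x : ℝ × ℝ} (hx : x ∈ U) : Lang x (1, 0) = -Real.sin (ang x) / n2 x := by
  rw [Lang_apply, sin_ang]
  have h2 : x.1 ^ 2 + x.2 ^ 2 = n2 x ^ 2 := n2_sq.symm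
  have h3 : ((0:ℝ) * x.1 - 1 * x.2) = -x.2 := by ring
  rw [h2, h3, sq, neg_div, neg_div, div_div]

lemma Lang_e1 {x : ℝ × ℝ} (hx : x ∈ U) : Lang x (0, 1) = Real.cos (ang x) / n2 x := by
  rw [Lang_apply, cos_ang hx]
  have h2 : x.1 ^ 2 + x.2 ^ 2 = n2 x ^ 2 := n2_sq.symm
  have h3 : ((1:ℝ) * x.1 - 0 * x.2) = x.1 := by ring
  rw [h2, h3, sq, div_div]

lemma hasDerivAt_Af (hβ1 : ContDiff ℝ 1 β) {t : ℝ} (hd : DifferentiableAt ℝ (deriv β) t) :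
    HasDerivAt (Af β) (-(β t + deriv (deriv β) t) * Real.sin t) t := by
  have hb := ((hβ1.differentiable one_ne_zero) t).hasDerivAt
  have hb' := hd.hasDerivAt
  have h := (hb.mul (Real.hasDerivAt_cos t)).sub (hb'.mul (Real.hasDerivAt_sin t))
  refine h.congr_deriv ?_
  ring

lemma hasDerivAt_Bf (hβ1 : ContDiff ℝ 1 β) {t : ℝ} (hd : DifferentiableAt ℝ (deriv β) t) :
    HasDerivAt (Bf β) ((β t + deriv (deriv β) t) * Real.cos t) t := by
  have hb := ((hβ1.differentiable one_ne_zero) t).hasDerivAt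
  have hb' := hd.hasDerivAt
  have h := (hb.mul (Real.hasDerivAt_sin t)).add (hb'.mul (Real.hasDerivAt_cos t))
  refine h.congr_deriv ?_
  ring

lemma fderiv_pd0 (hβ1 : ContDiff ℝ 1 β) {x : ℝ × ℝ} (hx : x ∈ U)
    (hd : DifferentiableAt ℝ (deriv β) (ang x)) :
    fderiv ℝ (pd 0 (vbeta β)) x
      = (-(β (ang x) + deriv (deriv β) (ang x)) * Real.sin (ang x)) • Lang x := by
  have hev : pd 0 (vbeta β) =ᶠ[nhds x] fun y => Af β (ang y) :=
    Filter.eventuallyEq_of_mem (isOpen_U.mem_nhds hx) (fun y hy => pd0_vbeta hβ1 hy)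
  rw [hev.fderiv_eq]
  exact ((hasDerivAt_Af hβ1 hd).comp_hasFDerivAt x (hasFDerivAt_ang hx)).fderiv

lemma fderiv_pd1 (hβ1 : ContDiff ℝ 1 β) {x : ℝ × ℝ} (hx : x ∈ U)
    (hd : DifferentiableAt ℝ (deriv β) (ang x)) :
    fderiv ℝ (pd 1 (vbeta β)) x
      = ((β (ang x) + deriv (deriv β) (ang x)) * Real.cos (ang x)) • Lang x := by
  have hev : pd 1 (vbeta β) =ᶠ[nhds x] fun y => Bf β (ang y) :=
    Filter.eventuallyEq_of_mem (isOpen_U.mem_nhds hx) (fun y hy => pd1_vbeta hβ1 hy)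
  rw [hev.fderiv_eq]
  exact ((hasDerivAt_Bf hβ1 hd).comp_hasFDerivAt x (hasFDerivAt_ang hx)).fderiv

lemma sqrt_hnormSq_eq (hβ1 : ContDiff ℝ 1 β) {x : ℝ × ℝ} (hx : x ∈ U)
    (hd : DifferentiableAt ℝ (deriv β) (ang x)) :
    Real.sqrt (hnormSq (vbeta β) x)
      = |β (ang x) + deriv (deriv β) (ang x)| / n2 x := by
  have hr := n2_pos (U_ne_zero hx)
  set t := ang x with ht
  set w := β t + deriv (deriv β) t with hw
  set s := Real.sin t
  set c := Real.cos t
  have e0 : (if (0 : Fin 2) = 0 then ((1:ℝ), (0:ℝ)) else (0, 1)) = (1, 0) := if_pos rfl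
  have e1 : (if (1 : Fin 2) = 0 then ((1:ℝ), (0:ℝ)) else (0, 1)) = (0, 1) := if_neg (by decide)
  have h00 : hess (vbeta β) 0 0 x = -w * s * (-s / n2 x) := by
    rw [hess, pd, fderiv_pd0 hβ1 hx hd, e0]
    simp only [ContinuousLinearMap.coe_smul', Pi.smul_apply, smul_eq_mul]
    rw [Lang_e0 hx]; try ring
  have h10 : hess (vbeta β) 1 0 x = -w * s * (c / n2 x) := by
    rw [hess, pd, fderiv_pd0 hβ1 hx hd, e1]
    simp only [ContinuousLinearMap.coe_smul', Pi.smul_apply, smul_eq_mul]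
    rw [Lang_e1 hx]; try ring
  have h01 : hess (vbeta β) 0 1 x = w * c * (-s / n2 x) := by
    rw [hess, pd, fderiv_pd1 hβ1 hx hd, e0]
    simp only [ContinuousLinearMap.coe_smul', Pi.smul_apply, smul_eq_mul]
    rw [Lang_e0 hx]; try ring
  have h11 : hess (vbeta β) 1 1 x = w * c * (c / n2 x) := by
    rw [hess, pd, fderiv_pd1 hβ1 hx hd, e1]
    simp only [ContinuousLinearMap.coe_smul', Pi.smul_apply, smul_eq_mul]
    rw [Lang_e1 hx]; try ring
  have hsum : hnormSq (vbeta β) x = (w / n2 x) ^ 2 := by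
    rw [hnormSq, Fin.sum_univ_two, Fin.sum_univ_two, Fin.sum_univ_two, h00, h01, h10, h11]
    have hsc : s ^ 2 + c ^ 2 = 1 := Real.sin_sq_add_cos_sq t
    have hrne := hr.ne'
    field_simp
    linear_combination (w ^ 2 * (s ^ 2 + c ^ 2 + 1)) * hsc
  rw [hsum, Real.sqrt_sq_eq_abs, abs_div, abs_of_pos hr]


lemma periodic_deriv' (f : ℝ → ℝ) (T : ℝ) (h : Function.Periodic f T) :
    Function.Periodic (deriv f) T := by
  intro t
  have : deriv (fun s => f (s + T)) t = deriv f (t + T) := deriv_comp_add_const f T t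
  rw [← this]
  congr 1
  funext s
  exact h s

lemma exists_good_set (β : ℝ → ℝ) (hper : Function.Periodic β (2 * π))
    (hβ1 : ContDiff ℝ 1 β)
    (hae : ∀ᵐ t : ℝ, DifferentiableAt ℝ (deriv β) t)
    (hpos : 0 < ∫ t in (0:ℝ)..(2 * π), |β t + deriv (deriv β) t|) :
    ∃ S : Set ℝ, MeasurableSet S ∧ S ⊆ Ioo (-π) π ∧ 0 < volume S ∧
      ∃ c : ℝ, 0 < c ∧ ∀ t ∈ S, c ≤ |β t + deriv (deriv β) t|
        ∧ DifferentiableAt ℝ (deriv β) t := by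
  set w : ℝ → ℝ := fun t => β t + deriv (deriv β) t with hw
  have hwmeas : Measurable w := (hβ1.continuous.measurable).add (measurable_deriv _)
  have hwper : Function.Periodic w (2 * π) := by
    intro t
    have h1 := hper t
    have h2 := periodic_deriv' _ _ (periodic_deriv' _ _ hper) t
    simp only [hw, h1, h2]
  set G : Set ℝ := {t | DifferentiableAt ℝ (deriv β) t} with hG
  set E : Set ℝ := {t ∈ Ioo (-π) π | w t ≠ 0} ∩ G with hE
  have hEmeas : MeasurableSet E :=
    ((measurableSet_Ioo.inter (hwmeas (measurableSet_singleton 0).compl)).inter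
      (measurableSet_of_differentiableAt ℝ (deriv β)))
  have hEpos : 0 < volume E := by
    refine (pos_iff_ne_zero).2 (fun hE0 => ?_)
    -- then w = 0 a.e. on Ioo (-π) π, hence on Ioc 0 (2π) by periodicity
    have hGc : volume Gᶜ = 0 := by
      have := ae_iff.1 hae
      simpa [hG, compl_setOf] using this
    have hN : volume {t ∈ Ioo (-π) π | w t ≠ 0} = 0 := by
      have hsub : {t ∈ Ioo (-π) π | w t ≠ 0} ⊆ E ∪ Gᶜ := by
        intro t ht
        by_cases hg : t ∈ G
        · exact Or.inl ⟨ht, hg⟩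
        · exact Or.inr hg
      exact le_antisymm (le_trans (measure_mono hsub)
        (le_trans (measure_union_le _ _) (by rw [hE0, hGc, add_zero]))) zero_le
    have hN2 : volume {t ∈ Ioo π (3 * π) | w t ≠ 0} = 0 := by
      have hpre : {t ∈ Ioo π (3 * π) | w t ≠ 0}
          = (fun t => t - 2 * π) ⁻¹' {t ∈ Ioo (-π) π | w t ≠ 0} := by
        ext t
        simp only [mem_setOf_eq, mem_preimage, mem_Ioo]
        constructor
        · rintro ⟨⟨h1, h2⟩, h3⟩
          refine ⟨⟨by linarith, by linarith⟩, ?_⟩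
          have := hwper (t - 2 * π)
          rw [sub_add_cancel] at this
          rwa [← this]
        · rintro ⟨⟨h1, h2⟩, h3⟩
          refine ⟨⟨by linarith, by linarith⟩, ?_⟩
          have := hwper (t - 2 * π)
          rw [sub_add_cancel] at this
          rwa [this]
      rw [hpre]
      have hfn : (fun t : ℝ => t - 2 * π) = fun t : ℝ => t + (-(2 * π)) :=
        funext fun t => by ring
      rw [hfn, measure_preimage_add_right]
      exact hN
    have hzero : ∀ᵐ t ∂(volume.restrict (Ioc 0 (2 * π))), |w t| = 0 := by
      rw [ae_restrict_iff' measurableSet_Ioc]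
      have hcover : {t : ℝ | ¬ (t ∈ Ioc 0 (2*π) → |w t| = 0)}
          ⊆ {t ∈ Ioo (-π) π | w t ≠ 0} ∪ {t ∈ Ioo π (3 * π) | w t ≠ 0} ∪ {π} := by
        intro t ht
        simp only [mem_setOf_eq, Classical.not_imp] at ht
        obtain ⟨⟨ht1, ht2⟩, ht3⟩ := ht
        have hwne : w t ≠ 0 := fun h => ht3 (by rw [h, abs_zero])
        have hpi := pi_pos
        rcases lt_trichotomy t π with h | h | h
        · exact Or.inl (Or.inl ⟨⟨by linarith, h⟩, hwne⟩)
        · exact Or.inr (by simp [h])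
        · exact Or.inl (Or.inr ⟨⟨h, by linarith⟩, hwne⟩)
      rw [ae_iff]
      refine le_antisymm (le_trans (measure_mono hcover) ?_) zero_le
      refine le_trans (measure_union_le _ _) ?_
      rw [measure_singleton]
      refine le_trans (add_le_add_left (measure_union_le _ _) _) ?_
      rw [hN, hN2]
      simp
    have : ∫ t in (0:ℝ)..(2 * π), |w t| = 0 := by
      rw [intervalIntegral.integral_of_le (by positivity)]
      exact integral_eq_zero_of_ae hzero
    rw [hw] at this
    simp only [this, lt_irrefl] at hpos
  -- now extract level set
  have hcup : E = ⋃ n : ℕ, {t ∈ E | 1 / (n + 1 : ℝ) ≤ |w t|} := by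
    ext t
    simp only [mem_iUnion, mem_setOf_eq]
    constructor
    · intro ht
      have hwne : w t ≠ 0 := ht.1.2
      have habs : 0 < |w t| := abs_pos.2 hwne
      obtain ⟨n, hn⟩ := exists_nat_gt (1 / |w t|)
      refine ⟨n, ht, ?_⟩
      rw [div_le_iff₀ (by positivity : (0:ℝ) < (n:ℝ) + 1)]
      rw [div_lt_iff₀ habs] at hn
      nlinarith
    · rintro ⟨n, hn, _⟩
      exact hn
  have : ∃ n : ℕ, 0 < volume {t ∈ E | 1 / (n + 1 : ℝ) ≤ |w t|} := by
    by_contra hc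
    push_neg at hc
    simp only [le_zero_iff] at hc
    have : volume E = 0 := by
      rw [hcup]
      refine le_antisymm (le_trans (measure_iUnion_le _) ?_) zero_le
      have : ∀ n : ℕ, volume {t | t ∈ E ∧ ((n:ℝ) + 1)⁻¹ ≤ |w t|} = 0 := by
        intro n
        have := hc n
        rwa [one_div] at this
      simp [this]
    rw [this] at hEpos
    exact lt_irrefl 0 hEpos
  obtain ⟨n, hn⟩ := this
  refine ⟨{t ∈ E | 1 / (n + 1 : ℝ) ≤ |w t|},
    hEmeas.inter (hwmeas.abs measurableSet_Ici), fun t ht => ht.1.1.1, hn,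
    1 / (n + 1 : ℝ), by positivity, fun t ht => ⟨ht.2, ht.1.2⟩⟩


lemma lintegral_inv_Ioo : ∫⁻ r in Ioo (0:ℝ) 1, ENNReal.ofReal r⁻¹ = ⊤ := by
  by_contra h
  have hint : IntegrableOn (fun r : ℝ => r⁻¹) (Ioo (0:ℝ) 1) := by
    constructor
    · exact measurable_inv.aestronglyMeasurable
    · rw [hasFiniteIntegral_iff_norm]
      have hcong : ∫⁻ r in Ioo (0:ℝ) 1, ENNReal.ofReal ‖r⁻¹‖
          = ∫⁻ r in Ioo (0:ℝ) 1, ENNReal.ofReal r⁻¹ := by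
        refine setLIntegral_congr_fun measurableSet_Ioo ?_
        intro r hr
        show ENNReal.ofReal ‖r⁻¹‖ = ENNReal.ofReal r⁻¹
        rw [Real.norm_eq_abs, abs_of_pos (inv_pos.2 hr.1)]
      rw [hcong]
      exact lt_top_iff_ne_top.2 h
  have heq : (fun x : ℝ => x ^ (-1:ℝ)) = fun x : ℝ => x⁻¹ := by
    funext x
    rw [show ((-1:ℝ) = ((-1:ℤ):ℝ)) by norm_num, Real.rpow_intCast, zpow_neg_one]
  have := (intervalIntegral.integrableOn_Ioo_rpow_iff (zero_lt_one)).1 (heq ▸ hint)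
  linarith

lemma polar_symm_apply (p : ℝ × ℝ) :
    polarCoord.symm p = (p.1 * Real.cos p.2, p.1 * Real.sin p.2) := rfl

lemma lintegral_T_top (S : Set ℝ) (hS : MeasurableSet S) (hS0 : volume S ≠ 0)
    (c : ℝ) (hc : 0 < c) :
    ∫⁻ p in Ioo (0:ℝ) 1 ×ˢ S, ENNReal.ofReal (c * (p.1)⁻¹) = ⊤ := by
  rw [Measure.volume_eq_prod, ← Measure.prod_restrict]
  have hmeas : Measurable fun p : ℝ × ℝ => ENNReal.ofReal (c * (p.1)⁻¹) :=
    (measurable_const.mul (measurable_inv.comp measurable_fst)).ennreal_ofReal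
  rw [lintegral_prod _ hmeas.aemeasurable]
  have hin : ∀ r : ℝ, ∫⁻ _ in S, ENNReal.ofReal (c * r⁻¹) = ENNReal.ofReal (c * r⁻¹) * volume S := by
    intro r
    rw [lintegral_const, Measure.restrict_apply_univ]
  simp only [hin]
  have hmeas2 : Measurable fun r : ℝ => ENNReal.ofReal (c * r⁻¹) :=
    (measurable_const.mul measurable_inv).ennreal_ofReal
  rw [lintegral_mul_const _ hmeas2]
  have hsplit : ∀ r : ℝ, ENNReal.ofReal (c * r⁻¹) = ENNReal.ofReal c * ENNReal.ofReal r⁻¹ :=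
    fun r => ENNReal.ofReal_mul hc.le
  simp only [hsplit]
  rw [lintegral_const_mul _ measurable_inv.ennreal_ofReal]
  rw [lintegral_inv_Ioo]
  rw [ENNReal.mul_top (by simp [ENNReal.ofReal_eq_zero]; linarith)]
  exact ENNReal.top_mul hS0

lemma real_bound {c v r q : ℝ} (hc : 0 < c) (hcv : c ≤ v) (hr0 : 0 < r) (hr1 : r < 1)
    (hq : 2 ≤ q) : c ^ q * r⁻¹ ≤ r * (v / r) ^ q := by
  have h1 : (c / r) ^ q ≤ (v / r) ^ q :=
    Real.rpow_le_rpow (by positivity) (by gcongr) (by linarith)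
  have h2 : (c / r) ^ q = c ^ q / r ^ q := Real.div_rpow hc.le hr0.le q
  have h3 : r * (c ^ q / r ^ q) = c ^ q * (r ^ (1:ℝ) / r ^ q) := by
    rw [Real.rpow_one]; ring
  have h4 : r ^ (1:ℝ) / r ^ q = r ^ (1 - q) := (Real.rpow_sub hr0 1 q).symm
  have h5 : r ^ (-1:ℝ) ≤ r ^ (1 - q) :=
    Real.rpow_le_rpow_of_exponent_ge hr0 hr1.le (by linarith)
  have h6 : r ^ (-1:ℝ) = r⁻¹ := Real.rpow_neg_one r
  calc c ^ q * r⁻¹ = c ^ q * r ^ (-1:ℝ) := by rw [h6]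
    _ ≤ c ^ q * r ^ (1 - q) := by
        have : (0:ℝ) ≤ c ^ q := (Real.rpow_pos_of_pos hc q).le
        nlinarith
    _ = r * (c / r) ^ q := by rw [h2, h3, h4]
    _ ≤ r * (v / r) ^ q := by nlinarith


/-- if `∫ |β + β''| > 0`, the Hessian of the cone `v_β` fails to be
in `L^p(B₁)` for every `p ≥ 2`. -/
theorem hessian_of_cone_not_Lp (p : ℝ) (hp : 2 < p) (β : ℝ → ℝ)
    (hβ : MemW2p p β)
    (hpos : 0 < ∫ t in (0:ℝ)..(2 * π), |β t + deriv (deriv β) t|) :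
    ∀ q : ℝ, 2 ≤ q →
      ¬ MemLp (fun x => Real.sqrt (hnormSq (vbeta β) x)) (ENNReal.ofReal q)
        (volume.restrict B1) := by
  obtain ⟨hper, hβ1, hae, _⟩ := hβ
  intro q hq hmem
  obtain ⟨S, hSmeas, hSsub, hSpos, c, hc, hSprop⟩ := exists_good_set β hper hβ1 hae hpos
  set g : ℝ × ℝ → ℝ := fun x => Real.sqrt (hnormSq (vbeta β) x) with hg
  set qe := ENNReal.ofReal q with hqe
  have hq0 : (0:ℝ) < q := by linarith
  have hqe0 : qe ≠ 0 := by
    simp only [hqe, Ne, ENNReal.ofReal_eq_zero, not_le]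
    linarith
  have hqet : qe ≠ ⊤ := ENNReal.ofReal_ne_top
  have hfin : ∫⁻ x in B1, (‖g x‖₊ : ℝ≥0∞) ^ q ∂volume < ⊤ := by
    have h2 := hmem.2
    rw [eLpNorm_eq_lintegral_rpow_enorm_toReal hqe0 hqet, ENNReal.toReal_ofReal hq0.le] at h2
    simp only [enorm_eq_nnnorm] at h2
    by_contra hcon
    push_neg at hcon
    rw [top_le_iff.1 hcon, ENNReal.top_rpow_of_pos (by positivity)] at h2
    exact lt_irrefl ⊤ h2
  set T : Set (ℝ × ℝ) := Ioo (0:ℝ) 1 ×ˢ S with hT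
  have hTmeas : MeasurableSet T := measurableSet_Ioo.prod hSmeas
  have hTsub : T ⊆ polarCoord.target := by
    rintro ⟨r, t⟩ ⟨hr, ht⟩
    exact ⟨hr.1, hSsub ht⟩
  set Bm : (ℝ × ℝ) → (ℝ × ℝ) →L[ℝ] (ℝ × ℝ) := fun p =>
    LinearMap.toContinuousLinearMap (Matrix.toLin (Module.Basis.finTwoProd ℝ) (Module.Basis.finTwoProd ℝ)
      !![Real.cos p.2, -p.1 * Real.sin p.2; Real.sin p.2, p.1 * Real.cos p.2]) with hBm
  have hBd : ∀ p ∈ T, HasFDerivWithinAt polarCoord.symm (Bm p) T p := fun p _ =>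
    (hasFDerivAt_polarCoord_symm p).hasFDerivWithinAt
  have hBdet : ∀ p : ℝ × ℝ, (Bm p).det = p.1 := by
    intro p
    conv_rhs => rw [← one_mul p.1, ← cos_sq_add_sin_sq p.2]
    simp only [hBm, neg_mul, LinearMap.det_toContinuousLinearMap, LinearMap.det_toLin,
      Matrix.det_fin_two_of, sub_neg_eq_add]
    ring
  have hinj : InjOn polarCoord.symm T := by
    refine (polarCoord.symm.injOn).mono ?_
    rw [OpenPartialHomeomorph.symm_source]
    exact hTsub
  have hchg := lintegral_image_eq_lintegral_abs_det_fderiv_mul volume hTmeas hBd hinj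
    (fun x => (‖g x‖₊ : ℝ≥0∞) ^ q)
  -- pointwise facts for p ∈ T
  have hpt : ∀ p ∈ T, n2 (polarCoord.symm p) = p.1 ∧ ang (polarCoord.symm p) = p.2
      ∧ polarCoord.symm p ∈ U := by
    intro p hp
    have hpT : p ∈ polarCoord.target := hTsub hp
    have hsrc : polarCoord.symm p ∈ polarCoord.source := polarCoord.map_target hpT
    have hri : polarCoord (polarCoord.symm p) = p := polarCoord.right_inv hpT
    constructor
    · exact congrArg Prod.fst hri
    constructor
    · have h2 := congrArg Prod.snd hri
      have h3 : (polarCoord (polarCoord.symm p)).2 = ang (polarCoord.symm p) := by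
        show Complex.arg (Complex.equivRealProd.symm (polarCoord.symm p)) = _
        rw [ang]
        have h4 : Complex.equivRealProd.symm (polarCoord.symm p)
            = (⟨(polarCoord.symm p).1, (polarCoord.symm p).2⟩ : ℂ) := by
          rw [Complex.equivRealProd_symm_apply]
          exact (Complex.mk_eq_add_mul_I _ _).symm
        rw [h4]
      rw [← h3, h2]
    · exact hsrc
  have himg : polarCoord.symm '' T ⊆ B1 := by
    rintro x ⟨p, hp, rfl⟩
    have h1 := (hpt p hp).1
    have hp1 : p.1 ∈ Ioo (0:ℝ) 1 := (mem_prod.1 hp).1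
    show n2 _ < 1
    rw [h1]
    exact hp1.2
  have hlow : ∫⁻ p in T, ENNReal.ofReal (c ^ q * (p.1)⁻¹)
      ≤ ∫⁻ p in T, ENNReal.ofReal |(Bm p).det| * (‖g (polarCoord.symm p)‖₊ : ℝ≥0∞) ^ q := by
    refine setLIntegral_mono' hTmeas ?_
    intro p hp
    obtain ⟨hn2x, hangx, hxU⟩ := hpt p hp
    have hp1 : p.1 ∈ Ioo (0:ℝ) 1 := (mem_prod.1 hp).1
    have hp2 : p.2 ∈ S := (mem_prod.1 hp).2
    have hd : DifferentiableAt ℝ (deriv β) (ang (polarCoord.symm p)) := by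
      rw [hangx]; exact (hSprop p.2 hp2).2
    have hgx : g (polarCoord.symm p)
        = |β p.2 + deriv (deriv β) p.2| / p.1 := by
      rw [hg]
      show Real.sqrt (hnormSq (vbeta β) (polarCoord.symm p)) = _
      rw [sqrt_hnormSq_eq hβ1 hxU hd, hangx, hn2x]
    have hcle : c ≤ |β p.2 + deriv (deriv β) p.2| := (hSprop p.2 hp2).1
    have hvpos : 0 < |β p.2 + deriv (deriv β) p.2| / p.1 := by
      apply div_pos (lt_of_lt_of_le hc hcle) hp1.1
    have hnn : (‖g (polarCoord.symm p)‖₊ : ℝ≥0∞)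
        = ENNReal.ofReal (|β p.2 + deriv (deriv β) p.2| / p.1) := by
      rw [hg]
      show (‖Real.sqrt (hnormSq (vbeta β) (polarCoord.symm p))‖₊ : ℝ≥0∞) = _
      rw [← enorm_eq_nnnorm, Real.enorm_eq_ofReal (Real.sqrt_nonneg _)]
      exact congrArg ENNReal.ofReal hgx
    rw [hBdet p, abs_of_pos hp1.1, hnn, ENNReal.ofReal_rpow_of_pos hvpos,
      ← ENNReal.ofReal_mul hp1.1.le]
    exact ENNReal.ofReal_le_ofReal (real_bound hc hcle hp1.1 hp1.2 hq)
  have htop : ∫⁻ p in T, ENNReal.ofReal (c ^ q * (p.1)⁻¹) = ⊤ :=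
    lintegral_T_top S hSmeas hSpos.ne' (c ^ q) (Real.rpow_pos_of_pos hc q)
  have hcontra : (⊤ : ℝ≥0∞) ≤ ∫⁻ x in B1, (‖g x‖₊ : ℝ≥0∞) ^ q ∂volume := by
    calc (⊤ : ℝ≥0∞) = ∫⁻ p in T, ENNReal.ofReal (c ^ q * (p.1)⁻¹) := htop.symm
      _ ≤ ∫⁻ p in T, ENNReal.ofReal |(Bm p).det|
          * (‖g (polarCoord.symm p)‖₊ : ℝ≥0∞) ^ q := hlow
      _ = ∫⁻ x in polarCoord.symm '' T, (‖g x‖₊ : ℝ≥0∞) ^ q := hchg.symm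
      _ ≤ ∫⁻ x in B1, (‖g x‖₊ : ℝ≥0∞) ^ q ∂volume := lintegral_mono_set himg
  rw [top_le_iff.1 hcontra] at hfin
  exact lt_irrefl ⊤ hfin
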